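/- Fix n ≥ 1 and let J be a maximal (for inclusion) adjacency-avoiding subset of I_n. Then for every K ∈ J, there exists m ∈ K such that the singleton interval ⟦m⟧ = {m} belongs to J. -/
import Mathlib


/-- `K` is an interval of `{1, …, n}`: a set `⟦i,j⟧ = {i, i+1, …, j}` with `1 ≤ i ≤ j ≤ n`. -/
def IsInterval (n : ℕ) (K : Set ℕ) : Prop :=
  ∃ i j, 1 ≤ i ∧ i ≤ j ∧ j ≤ n ∧ K = Set.Icc i j

/-- The lower bound `b(K)` of an interval `K`. -/
noncomputable def intB (K : Set ℕ) : ℕ := sInf K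

/-- The upper bound `e(K)` of an interval `K`. -/
noncomputable def intE (K : Set ℕ) : ℕ := sSup K

/-- `J(B, E)`: the set of intervals `K` of `{1, …, n}` with `b(K) ∈ B` and `e(K) ∈ E`. -/
def intervalsOf (n : ℕ) (B E : Set ℕ) : Set (Set ℕ) :=
  {K | IsInterval n K ∧ intB K ∈ B ∧ intE K ∈ E}

/-- Two intervals `K`, `L` are adjacent if `b(K) = e(L) + 1` or `b(L) = e(K) + 1`. -/
def Adjacent (K L : Set ℕ) : Prop :=
  intB K = intE L + 1 ∨ intB L = intE K + 1

/-- An interval set is adjacency-avoiding if it contains no pair of adjacent intervals. -/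
def AdjAvoiding (J : Set (Set ℕ)) : Prop :=
  ∀ K ∈ J, ∀ L ∈ J, ¬ Adjacent K L

/-- The shift `A[1] = {a + 1 : a ∈ A}` of a set of integers. -/
def shiftSet (A : Set ℕ) : Set ℕ := (· + 1) '' A

/-- In a maximal (for inclusion) adjacency-avoiding subset `J` of `I_n`, every interval
`K ∈ J` contains some `m` whose singleton interval `⟦m⟧ = {m}` lies in `J`. -/
theorem maximal_adjAvoiding_singleton (n : ℕ) (hn : 1 ≤ n) (J : Set (Set ℕ))
    (hJint : ∀ K ∈ J, IsInterval n K)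
    (hJ : AdjAvoiding J)
    (hmax : ∀ K : Set ℕ, IsInterval n K → K ∉ J → ¬ AdjAvoiding (J ∪ {K})) :
    ∀ K ∈ J, ∃ m ∈ K, ({m} : Set ℕ) ∈ J := by
  intro K hK
  obtain ⟨i, j, hi1, hij, hjn, hKeq⟩ := hJint K hK
  by_contra hno
  push_neg at hno
  have hbK : intB K = i := by rw [hKeq]; exact csInf_Icc hij
  have heK : intE K = j := by rw [hKeq]; exact csSup_Icc hij
  have step : ∀ m, i ≤ m → m ≤ j → ∃ L ∈ J, (m = intE L + 1 ∨ intB L = m + 1) := by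
    intro m him hmj
    have hmem : m ∈ K := by rw [hKeq]; exact ⟨him, hmj⟩
    have hsingInt : IsInterval n {m} :=
      ⟨m, m, hi1.trans him, le_refl m, hmj.trans hjn, (Set.Icc_self m).symm⟩
    have hbm : intB ({m} : Set ℕ) = m := csInf_singleton m
    have hem : intE ({m} : Set ℕ) = m := csSup_singleton m
    have hnotAA := hmax {m} hsingInt (hno m hmem)
    simp only [AdjAvoiding, not_forall] at hnotAA
    obtain ⟨K', hK', L', hL', hadj⟩ := hnotAA
    rw [not_not] at hadj
    rcases hK' with hK' | hK' <;> rcases hL' with hL' | hL'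
    · exact absurd hadj (hJ K' hK' L' hL')
    · rw [Set.mem_singleton_iff] at hL'; subst hL'
      rcases hadj with h | h
      · exact ⟨K', hK', Or.inr (by rw [hem] at h; omega)⟩
      · exact ⟨K', hK', Or.inl (by rw [hbm] at h; omega)⟩
    · rw [Set.mem_singleton_iff] at hK'; subst hK'
      rcases hadj with h | h
      · exact ⟨L', hL', Or.inl (by rw [hbm] at h; omega)⟩
      · exact ⟨L', hL', Or.inr (by rw [hem] at h; omega)⟩
    · rw [Set.mem_singleton_iff] at hK' hL'; subst hK'; subst hL'
      rcases hadj with h | h <;> rw [hbm, hem] at h <;> omega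
  have key : ∀ d m, m + d = j → i ≤ m → ∃ L ∈ J, m = intE L + 1 := by
    intro d
    induction d with
    | zero =>
      intro m hm him
      obtain ⟨L, hL, hcase⟩ := step m him (by omega)
      rcases hcase with h | h
      · exact ⟨L, hL, h⟩
      · exact absurd (Or.inr (by rw [heK]; omega) : Adjacent K L) (hJ K hK L hL)
    | succ d ih =>
      intro m hm him
      obtain ⟨L', hL', hL'e⟩ := ih (m + 1) (by omega) (by omega)
      obtain ⟨L, hL, hcase⟩ := step m him (by omega)
      rcases hcase with h | h
      · exact ⟨L, hL, h⟩
      · exact absurd (Or.inl (by omega) : Adjacent L L') (hJ L hL L' hL')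
  obtain ⟨L, hL, hLe⟩ := key (j - i) i (by omega) le_rfl
  exact hJ K hK L hL (Or.inl (by rw [hbK]; omega))
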